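/- Let n ≥ 4 and γ > 1. Define γ_1 = 1 + 3/n. Suppose 1 < γ ≤ γ_1. Then there exist exponents p, q, p̃, q̃ with (1/p, 1/q) and (1/p̃, 1/q̃) in the admissible set T_n = {(1/p,1/q) ∈ (0,1/2] × (0,1/2) : 2/p + (n-1)/q ≥ (n-1)/2}, such that: (i) p > p̃' γ, (ii) 0 < 1/q̃' ≤ γ/q < 1, and (iii) (n-1)/2 - ((n+1)/2)(1/q + 1/q̃) ≤ n(1/q̃' - γ/q), where p̃' and q̃' denote Hölder conjugates. -/

import Mathlib

set_option maxHeartbeats 1600000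

private lemma aux_div_one_div (a b : ℝ) : a / (1 / b) = a * b := by
  rw [one_div, div_inv_eq_mul]


/-- Case (A) of the local well-posedness argument: for `n ≥ 4` and
`1 < γ ≤ 1 + 3/n`, there exist admissible Strichartz exponents `(p,q)` and
`(p̃,q̃)` (with `(1/p,1/q), (1/p̃,1/q̃)` in the admissible triangle `T_n`)
satisfying the compatibility conditions (i)–(iii) of the fixed point scheme;
here `p̃' = p̃/(p̃-1)` and `q̃' = q̃/(q̃-1)` denote Hölder conjugates. -/
theorem admissible_exponents_caseA (n : ℕ) (hn : 4 ≤ n) (γ : ℝ)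
    (hγ1 : 1 < γ) (hγ2 : γ ≤ 1 + 3 / (n : ℝ)) :
    ∃ p q tp tq : ℝ,
      -- (p, q) admissible
      (0 < 1 / p ∧ 1 / p ≤ 1 / 2 ∧ 0 < 1 / q ∧ 1 / q < 1 / 2 ∧
        ((n : ℝ) - 1) / 2 ≤ 2 / p + ((n : ℝ) - 1) / q) ∧
      -- (p̃, q̃) admissible
      (0 < 1 / tp ∧ 1 / tp ≤ 1 / 2 ∧ 0 < 1 / tq ∧ 1 / tq < 1 / 2 ∧
        ((n : ℝ) - 1) / 2 ≤ 2 / tp + ((n : ℝ) - 1) / tq) ∧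
      -- (i)  p > p̃' γ
      (tp / (tp - 1)) * γ < p ∧
      -- (ii) 0 < 1/q̃' ≤ γ/q < 1
      (0 < 1 - 1 / tq ∧ 1 - 1 / tq ≤ γ / q ∧ γ / q < 1) ∧
      -- (iii) (n-1)/2 - ((n+1)/2)(1/q + 1/q̃) ≤ n(1/q̃' - γ/q)
      ((n : ℝ) - 1) / 2 - (((n : ℝ) + 1) / 2) * (1 / q + 1 / tq) ≤
        (n : ℝ) * ((1 - 1 / tq) - γ / q) := by
  have hN0' : (4:ℝ) ≤ (n:ℝ) := by exact_mod_cast hn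
  obtain ⟨N, hNdef⟩ : ∃ N : ℝ, N = (n:ℝ) := ⟨_, rfl⟩
  rw [← hNdef] at hγ2 hN0' ⊢
  have hN : (4:ℝ) ≤ N := hN0'
  have hγ0 : (0:ℝ) < γ := by linarith
  have hN0 : (0:ℝ) < N := by linarith
  have hN1 : (0:ℝ) < N - 1 := by linarith
  -- γ ≤ 7/4 and N*(γ-1) ≤ 3
  have h3N : 3 / N ≤ 3 / 4 := by
    apply div_le_div_of_nonneg_left (by norm_num) (by norm_num) hN
  have hγ74 : γ ≤ 7/4 := by linarith
  have hNγ : N * (γ - 1) ≤ 3 := by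
    have h := mul_le_mul_of_nonneg_left hγ2 hN0.le
    have h2 : N * (1 + 3 / N) = N + 3 := by field_simp
    nlinarith
  obtain ⟨L, hLdef⟩ : ∃ L : ℝ, L = max (1/(2*γ)) (1/2 - 1/((N-1)*γ)) := ⟨_, rfl⟩
  obtain ⟨U, hUdef⟩ : ∃ U : ℝ, U = min (1/2) ((N+1)/(2*(N-1)*γ)) := ⟨_, rfl⟩
  have hd : (0:ℝ) < (N-1)*γ := mul_pos hN1 hγ0
  -- the four cross inequalities
  have i11 : 1/(2*γ) < 1/2 := by
    rw [div_lt_div_iff₀ (by positivity) (by norm_num)]; linarith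
  have i12 : 1/(2*γ) < (N+1)/(2*(N-1)*γ) := by
    rw [div_lt_div_iff₀ (by positivity) (by positivity)]; nlinarith
  have i21 : 1/2 - 1/((N-1)*γ) < 1/2 := by
    have : (0:ℝ) < 1/((N-1)*γ) := by positivity
    linarith
  have hNγ3 : (N-1)*γ < N + 3 := by nlinarith
  have i22 : 1/2 - 1/((N-1)*γ) < (N+1)/(2*(N-1)*γ) := by
    rw [div_sub_div _ _ (two_ne_zero) hd.ne', div_lt_div_iff₀ (by positivity) (by positivity)]
    nlinarith
  have hLU : L < U := by rw [hLdef, hUdef]; exact max_lt (lt_min i11 i12) (lt_min i21 i22)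
  obtain ⟨a, haL, haU⟩ : ∃ a, L < a ∧ a < U := ⟨(L + U)/2, by linarith, by linarith⟩
  have hL1 : 1/(2*γ) < a := lt_of_le_of_lt (hLdef ▸ le_max_left _ _) haL
  have hL2 : 1/2 - 1/((N-1)*γ) < a := lt_of_le_of_lt (hLdef ▸ le_max_right _ _) haL
  have hU1 : a < 1/2 := lt_of_lt_of_le haU (hUdef ▸ min_le_left _ _)
  have hU2 : a < (N+1)/(2*(N-1)*γ) := lt_of_lt_of_le haU (hUdef ▸ min_le_right _ _)
  clear haL haU hLU hLdef hUdef i11 i12 i21 i22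
  have ha0 : 0 < a := lt_trans (by positivity) hL1
  -- γ * a bounds
  have hginv : γ * (1/(2*γ)) = 1/2 := by field_simp
  have hga1 : 1/2 < γ * a := by
    have := mul_lt_mul_of_pos_left hL1 hγ0
    linarith [hginv ▸ this]
  have hga2 : γ * a < 1 := by nlinarith
  obtain ⟨b, hbdef⟩ : ∃ b : ℝ, b = 1 - γ * a := ⟨_, rfl⟩
  have hb0 : 0 < b := by rw [hbdef]; linarith
  have hb2 : b < 1/2 := by rw [hbdef]; linarith
  -- key for (tp,tq) admissibility: (N-1)*γ*a < (N+1)/2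
  have hkey2 : (N-1)*γ*a < (N+1)/2 := by
    have h := mul_lt_mul_of_pos_left hU2 hd
    have h2 : (N-1)*γ * ((N+1)/(2*(N-1)*γ)) = (N+1)/2 := by field_simp
    nlinarith
  -- choice of u = 1/p
  obtain ⟨LB, hLBdef⟩ : ∃ LB : ℝ, LB = (N-1)*(1/2 - a)/2 := ⟨_, rfl⟩
  have hLB0 : 0 < LB := by rw [hLBdef]; have := mul_pos hN1 (by linarith : (0:ℝ) < 1/2 - a); linarith
  have hLBlt : LB < 1/(2*γ) := by
    have h1 : 1/2 - a < 1/((N-1)*γ) := by linarith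
    have h2 := mul_lt_mul_of_pos_left h1 (by positivity : (0:ℝ) < (N-1)/2)
    have h3 : (N-1)/2 * (1/((N-1)*γ)) = 1/(2*γ) := by field_simp
    nlinarith
  obtain ⟨u, hu0, huγ, huLB⟩ : ∃ u : ℝ, 0 < u ∧ u < 1/(2*γ) ∧ LB ≤ u :=
    ⟨(LB + 1/(2*γ))/2, by linarith, by linarith, by linarith⟩
  have hu2 : u ≤ 1/2 := le_of_lt (lt_trans huγ (by rw [div_lt_div_iff₀ (by positivity) (by norm_num)]; linarith))
  refine ⟨1/u, 1/a, 2, 1/b, ?_, ?_, ?_, ?_, ?_⟩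
  · simp only [one_div_one_div, aux_div_one_div]
    refine ⟨hu0, hu2, ha0, hU1, ?_⟩
    rw [hLBdef] at huLB; nlinarith
  · simp only [one_div_one_div, aux_div_one_div]
    norm_num
    refine ⟨hb0, hb2, ?_⟩
    rw [hbdef]; nlinarith
  · norm_num
    have hgoal : 2*γ*u < 1 := by
      have := mul_lt_mul_of_pos_left huγ (by positivity : (0:ℝ) < 2*γ)
      have h2 : 2*γ*(1/(2*γ)) = 1 := by field_simp
      nlinarith
    rw [← one_div, lt_div_iff₀ hu0]; linarith
  · simp only [one_div_one_div, aux_div_one_div]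
    refine ⟨by rw [hbdef]; linarith, by rw [hbdef]; linarith, hga2⟩
  · simp only [one_div_one_div, aux_div_one_div]
    have h1 : N*(γ-1)*a ≤ 3*a := mul_le_mul_of_nonneg_right hNγ ha0.le
    have h2 : (γ-1)*a ≤ (3/4)*(1/2) := by nlinarith
    rw [hbdef]; nlinarith
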